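/- Asymptotic negative answer to Hochster's solid closure question: for every prime number p and every natural number r there exists a bound N = N(p, r) with the following property. Let V be a discrete valuation ring of characteristic zero with uniformizing parameter π whose residue field has characteristic p, and suppose p ∈ π^N V. Let R := V[[X, Y]] be the power series ring in two variables over V, with maximal ideal m = (π, X, Y)R. Then for every commutative R-algebra T admitting an R-linear map φ : T → R with φ(1) ∉ m^r, the element π²X²Y² does not lie in the ideal (π³, X³, Y³)·T. -/

import Mathlib

open MvPowerSeries Finsupp

private lemma frob3 {T : Type*} [CommRing T] {p : ℕ} (hp : p.Prime) (n : ℕ) (x y z : T) :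
    ∃ d, (x + y + z) ^ p ^ n = x ^ p ^ n + y ^ p ^ n + z ^ p ^ n + p * d := by
  obtain ⟨s, hs⟩ := (Commute.all (x + y) z).exists_add_pow_prime_pow_eq hp n
  obtain ⟨t, ht⟩ := (Commute.all x y).exists_add_pow_prime_pow_eq hp n
  exact ⟨x * y * t + (x + y) * z * s, by rw [hs, ht]; ring⟩

private lemma decomp {V : Type*} [CommRing V] (q : ℕ) (π : V) (g : MvPowerSeries (Fin 2) V)
    (h : ∀ e : Fin 2 →₀ ℕ, e 0 < q → e 1 < q → π ^ q ∣ MvPowerSeries.coeff e g) :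
    g ∈ Ideal.span {MvPowerSeries.C (σ := Fin 2) (R := V) π ^ q,
      (MvPowerSeries.X 0 : MvPowerSeries (Fin 2) V) ^ q, MvPowerSeries.X 1 ^ q} := by
  classical
  set B : MvPowerSeries (Fin 2) V := fun e => g (e + Finsupp.single 0 q) with hBdef
  have hXB : ∀ m : Fin 2 →₀ ℕ, MvPowerSeries.coeff m ((X (0 : Fin 2)) ^ q * B)
      = if q ≤ m 0 then MvPowerSeries.coeff m g else 0 := by
    intro m
    rw [X_pow_eq, coeff_monomial_mul]
    by_cases hm : q ≤ m 0
    · rw [if_pos (Finsupp.single_le_iff.mpr hm), if_pos hm, one_mul, coeff_apply, hBdef,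
        coeff_apply]
      show g _ = g m
      rw [tsub_add_cancel_of_le (Finsupp.single_le_iff.mpr hm)]
    · rw [if_neg (fun hc => hm (Finsupp.single_le_iff.mp hc)), if_neg hm]
  set g1 : MvPowerSeries (Fin 2) V := g - (X (0 : Fin 2)) ^ q * B with hg1def
  set C' : MvPowerSeries (Fin 2) V := fun e => g1 (e + Finsupp.single 1 q) with hCdef
  have hXC : ∀ m : Fin 2 →₀ ℕ, MvPowerSeries.coeff m ((X (1 : Fin 2)) ^ q * C')
      = if q ≤ m 1 then MvPowerSeries.coeff m g1 else 0 := by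
    intro m
    rw [X_pow_eq, coeff_monomial_mul]
    by_cases hm : q ≤ m 1
    · rw [if_pos (Finsupp.single_le_iff.mpr hm), if_pos hm, one_mul, coeff_apply, hCdef,
        coeff_apply]
      show g1 _ = g1 m
      rw [tsub_add_cancel_of_le (Finsupp.single_le_iff.mpr hm)]
    · rw [if_neg (fun hc => hm (Finsupp.single_le_iff.mp hc)), if_neg hm]
  set g2 : MvPowerSeries (Fin 2) V := g1 - (X (1 : Fin 2)) ^ q * C' with hg2def
  have hdiv : ∀ m : Fin 2 →₀ ℕ, ∃ x : V, MvPowerSeries.coeff m g2 = π ^ q * x := by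
    intro m
    rw [hg2def, map_sub, hXC, hg1def, map_sub, hXB]
    by_cases h0 : q ≤ m 0
    · rw [if_pos h0]
      by_cases h1 : q ≤ m 1
      · exact ⟨0, by rw [if_pos h1]; ring⟩
      · exact ⟨0, by rw [if_neg h1]; ring⟩
    · rw [if_neg h0]
      by_cases h1 : q ≤ m 1
      · exact ⟨0, by rw [if_pos h1]; ring⟩
      · obtain ⟨x, hx⟩ := h m (lt_of_not_ge h0) (lt_of_not_ge h1)
        exact ⟨x, by rw [if_neg h1, sub_zero, sub_zero, hx]⟩
  set A : MvPowerSeries (Fin 2) V := fun m => (hdiv m).choose with hAdef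
  have hA : MvPowerSeries.C (σ := Fin 2) (R := V) (π ^ q) * A = g2 := by
    ext m
    rw [coeff_C_mul, hAdef, coeff_apply]
    exact ((hdiv m).choose_spec).symm
  have hg : g = (X (0 : Fin 2)) ^ q * B + (X (1 : Fin 2)) ^ q * C'
      + MvPowerSeries.C (σ := Fin 2) (R := V) (π ^ q) * A := by
    rw [hA, hg2def, hg1def]; ring
  rw [hg]
  refine Ideal.add_mem _ (Ideal.add_mem _ ?_ ?_) ?_
  · exact Ideal.mul_mem_right _ _ (Ideal.subset_span (by simp))
  · exact Ideal.mul_mem_right _ _ (Ideal.subset_span (by simp))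
  · rw [← map_pow]
    exact Ideal.mul_mem_right _ _ (Ideal.subset_span (by simp))


private lemma extract {V : Type*} [CommRing V] [IsDomain V] {π : V} (hπ : π ≠ 0) (q : ℕ)
    (g a b c : MvPowerSeries (Fin 2) V)
    (heq : (MvPowerSeries.C (σ := Fin 2) (R := V) π ^ 2 * (MvPowerSeries.X 0 : MvPowerSeries (Fin 2) V) ^ 2
        * MvPowerSeries.X 1 ^ 2) ^ q * g
      = MvPowerSeries.C (σ := Fin 2) (R := V) π ^ (3 * q) * a
        + (MvPowerSeries.X 0 : MvPowerSeries (Fin 2) V) ^ (3 * q) * b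
        + MvPowerSeries.X 1 ^ (3 * q) * c) :
    ∀ e : Fin 2 →₀ ℕ, e 0 < q → e 1 < q → π ^ q ∣ MvPowerSeries.coeff e g := by
  classical
  intro e he0 he1
  set D : Fin 2 →₀ ℕ := Finsupp.single 0 (2 * q) + Finsupp.single 1 (2 * q) with hD
  have hD0 : D 0 = 2 * q := by
    rw [hD, Finsupp.add_apply, Finsupp.single_eq_same,
      Finsupp.single_eq_of_ne (by decide : (0 : Fin 2) ≠ 1), add_zero]
  have hD1 : D 1 = 2 * q := by
    rw [hD, Finsupp.add_apply, Finsupp.single_eq_same,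
      Finsupp.single_eq_of_ne (by decide : (1 : Fin 2) ≠ 0), zero_add]
  have hL : (MvPowerSeries.C (σ := Fin 2) (R := V) π ^ 2 * (MvPowerSeries.X 0 : MvPowerSeries (Fin 2) V) ^ 2
      * MvPowerSeries.X 1 ^ 2) ^ q = monomial D (π ^ (2 * q)) := by
    rw [mul_pow, mul_pow, ← pow_mul, ← pow_mul, ← pow_mul, ← map_pow, ← monomial_zero_eq_C_apply, X_pow_eq, X_pow_eq,
      monomial_mul_monomial, monomial_mul_monomial, mul_one, mul_one, zero_add, hD]
  have hcoef := congrArg (MvPowerSeries.coeff (D + e)) heq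
  rw [hL, coeff_add_monomial_mul, map_add, map_add, ← map_pow, coeff_C_mul,
    X_pow_eq, X_pow_eq, coeff_monomial_mul, coeff_monomial_mul,
    if_neg (fun hc => by
      have := Finsupp.single_le_iff.mp hc
      rw [Finsupp.add_apply, hD0] at this
      omega),
    if_neg (fun hc => by
      have := Finsupp.single_le_iff.mp hc
      rw [Finsupp.add_apply, hD1] at this
      omega), add_zero, add_zero] at hcoef
  have h3q : (3 : ℕ) * q = 2 * q + q := by ring
  rw [h3q, pow_add, mul_assoc] at hcoef
  exact ⟨MvPowerSeries.coeff (D + e) a,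
    mul_left_cancel₀ (pow_ne_zero _ hπ) hcoef⟩


/-- Asymptotic negative answer to Hochster's question: for fixed `(p, r)` there
is a bound `N` such that for any mixed characteristic complete DVR-style
situation `R = V[[X, Y]]` with `p ∈ π ^ N V`, the element `π² X² Y²` does not
lie in `(π³, X³, Y³) · T` for any `R`-algebra `T` admitting an `R`-linear map
`φ : T → R` with `φ 1 ∉ m ^ r`. -/
theorem stmt_12 (p : ℕ) (hp : p.Prime) (r : ℕ) :
    ∃ N : ℕ, ∀ (V : Type u) [CommRing V] [IsDomain V] [IsDiscreteValuationRing V]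
      [CharZero V] [CharP (IsLocalRing.ResidueField V) p],
      ∀ π : V, IsLocalRing.maximalIdeal V = Ideal.span {π} →
      π ^ N ∣ (p : V) →
      ∀ (T : Type u) [CommRing T] [Algebra (MvPowerSeries (Fin 2) V) T],
      ∀ φ : T →ₗ[MvPowerSeries (Fin 2) V] MvPowerSeries (Fin 2) V,
      φ 1 ∉ (Ideal.span {(MvPowerSeries.C π : MvPowerSeries (Fin 2) V),
        (MvPowerSeries.X 0 : MvPowerSeries (Fin 2) V), MvPowerSeries.X 1}) ^ r →
      algebraMap (MvPowerSeries (Fin 2) V) T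
          ((MvPowerSeries.C π : MvPowerSeries (Fin 2) V) ^ 2 *
            (MvPowerSeries.X 0 : MvPowerSeries (Fin 2) V) ^ 2 *
            MvPowerSeries.X 1 ^ 2) ∉
        Ideal.map (algebraMap (MvPowerSeries (Fin 2) V) T)
          (Ideal.span {(MvPowerSeries.C π : MvPowerSeries (Fin 2) V) ^ 3,
            (MvPowerSeries.X 0 : MvPowerSeries (Fin 2) V) ^ 3,
            MvPowerSeries.X 1 ^ 3}) := by
  refine ⟨3 * p ^ r, ?_⟩
  intro V _ _ _ _ _ π hπm hdvd T _ _ φ hφ1 hmem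
  classical
  have hπ : π ≠ 0 := by
    intro h
    exact IsDiscreteValuationRing.not_a_field V
      (by rw [hπm, h, Ideal.span_singleton_eq_bot])
  set q : ℕ := p ^ r with hq
  set f := algebraMap (MvPowerSeries (Fin 2) V) T with hf
  -- decompose the membership
  rw [Ideal.map_span, Set.image_insert_eq, Set.image_insert_eq, Set.image_singleton,
    Ideal.mem_span_insert] at hmem
  obtain ⟨t1, w, hw, hz⟩ := hmem
  rw [Ideal.mem_span_insert] at hw
  obtain ⟨t2, w2, hw2, hweq⟩ := hw
  rw [Ideal.mem_span_singleton] at hw2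
  obtain ⟨t3, ht3⟩ := hw2
  have hzz : f (MvPowerSeries.C (σ := Fin 2) (R := V) π ^ 2
        * (MvPowerSeries.X 0 : MvPowerSeries (Fin 2) V) ^ 2 * MvPowerSeries.X 1 ^ 2)
      = t1 * f (MvPowerSeries.C (σ := Fin 2) (R := V) π ^ 3)
        + t2 * f ((MvPowerSeries.X 0 : MvPowerSeries (Fin 2) V) ^ 3)
        + f (MvPowerSeries.X 1 ^ 3) * t3 := by
    rw [hz, hweq, ht3]; ring
  obtain ⟨d, hd⟩ := (show ∃ d, (t1 * f (MvPowerSeries.C (σ := Fin 2) (R := V) π ^ 3)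
        + t2 * f ((MvPowerSeries.X 0 : MvPowerSeries (Fin 2) V) ^ 3)
        + f (MvPowerSeries.X 1 ^ 3) * t3) ^ p ^ r
      = (t1 * f (MvPowerSeries.C (σ := Fin 2) (R := V) π ^ 3)) ^ p ^ r
        + (t2 * f ((MvPowerSeries.X 0 : MvPowerSeries (Fin 2) V) ^ 3)) ^ p ^ r
        + (f (MvPowerSeries.X 1 ^ 3) * t3) ^ p ^ r + p * d from by
    exact frob3 hp r _ _ _)
  -- the p-term
  obtain ⟨v', hv'⟩ := hdvd
  have hpT : (p : T) = f (MvPowerSeries.C (σ := Fin 2) (R := V) π ^ (3 * q)) * f (MvPowerSeries.C (σ := Fin 2) (R := V) v') := by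
    rw [← map_mul, ← map_pow, ← map_mul, ← map_natCast f p, ← map_natCast (MvPowerSeries.C (σ := Fin 2) (R := V)) p,
      hv', hq]
  -- the key equation in T
  have keyT : f ((MvPowerSeries.C (σ := Fin 2) (R := V) π ^ 2
        * (MvPowerSeries.X 0 : MvPowerSeries (Fin 2) V) ^ 2 * MvPowerSeries.X 1 ^ 2) ^ q)
      = f (MvPowerSeries.C (σ := Fin 2) (R := V) π ^ (3 * q))
          * (t1 ^ q + f (MvPowerSeries.C (σ := Fin 2) (R := V) v') * d)
        + f ((MvPowerSeries.X 0 : MvPowerSeries (Fin 2) V) ^ (3 * q)) * t2 ^ q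
        + f (MvPowerSeries.X 1 ^ (3 * q)) * t3 ^ q := by
    rw [map_pow, hzz, hq, hd, mul_pow, mul_pow, mul_pow,
      ← map_pow f, ← map_pow f, ← map_pow f, ← pow_mul, ← pow_mul, ← pow_mul, hpT, ← hq]
    ring
  -- apply φ
  have hφmul : ∀ (x : MvPowerSeries (Fin 2) V) (t : T), φ (f x * t) = x * φ t := by
    intro x t
    rw [← Algebra.smul_def, map_smul, smul_eq_mul]
  have h1 : (MvPowerSeries.C (σ := Fin 2) (R := V) π ^ 2
        * (MvPowerSeries.X 0 : MvPowerSeries (Fin 2) V) ^ 2 * MvPowerSeries.X 1 ^ 2) ^ q * φ 1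
      = MvPowerSeries.C (σ := Fin 2) (R := V) π ^ (3 * q)
          * φ (t1 ^ q + f (MvPowerSeries.C (σ := Fin 2) (R := V) v') * d)
        + (MvPowerSeries.X 0 : MvPowerSeries (Fin 2) V) ^ (3 * q) * φ (t2 ^ q)
        + MvPowerSeries.X 1 ^ (3 * q) * φ (t3 ^ q) := by
    have h2 := congrArg φ keyT
    rw [← mul_one (f ((MvPowerSeries.C (σ := Fin 2) (R := V) π ^ 2
      * (MvPowerSeries.X 0 : MvPowerSeries (Fin 2) V) ^ 2 * MvPowerSeries.X 1 ^ 2) ^ q)),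
      map_add, map_add, hφmul, hφmul, hφmul, hφmul] at h2
    exact h2
  have hcoef := extract hπ q (φ 1) _ _ _ h1
  have hspan := decomp q π (φ 1) hcoef
  apply hφ1
  have h2 : Ideal.span {MvPowerSeries.C (σ := Fin 2) (R := V) π ^ q,
        (MvPowerSeries.X 0 : MvPowerSeries (Fin 2) V) ^ q, MvPowerSeries.X 1 ^ q}
      ≤ (Ideal.span {MvPowerSeries.C (σ := Fin 2) (R := V) π,
        (MvPowerSeries.X 0 : MvPowerSeries (Fin 2) V), MvPowerSeries.X 1}) ^ q := by
    rw [Ideal.span_le]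
    rintro x (rfl | rfl | rfl) <;>
      exact Ideal.pow_mem_pow (Ideal.subset_span (by simp)) q
  have h3 : (Ideal.span {MvPowerSeries.C (σ := Fin 2) (R := V) π,
        (MvPowerSeries.X 0 : MvPowerSeries (Fin 2) V), MvPowerSeries.X 1}) ^ q
      ≤ (Ideal.span {MvPowerSeries.C (σ := Fin 2) (R := V) π,
        (MvPowerSeries.X 0 : MvPowerSeries (Fin 2) V), MvPowerSeries.X 1}) ^ r :=
    Ideal.pow_le_pow_right (le_of_lt (Nat.lt_pow_self hp.one_lt))
  exact h3 (h2 hspan)
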